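/- Let ℓ₃ : I → ℝ be differentiable with ℓ₃ ≠ 0, and let a₃ : I → ℝ be differentiable and nonzero, and suppose a₁, a₂, ℓ₁, ℓ₂ satisfy the algebraic relations a₁a₂a₃ = 1, ℓ₁ℓ₂ℓ₃ = 1, ℓ₁'a₁² = −c₁₆, ℓ₂'a₂² = −c₂₄ with c₁₆, c₂₄ ≠ 0 and ℓ₁, ℓ₂ differentiable and nonvanishing with ℓ₁', ℓ₂' nonvanishing. Then u := ℓ₁'/ℓ₁ satisfies the quadratic equation ℓ₃u² + ℓ₃'u + c₁₆c₂₄ℓ₃²a₃² = 0 pointwise on I. -/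

import Mathlib

/-- Elimination in the m = 6, case 2 system: from a₁a₂a₃ = 1, ℓ₁ℓ₂ℓ₃ = 1,
ℓ₁'a₁² = −c₁₆, ℓ₂'a₂² = −c₂₄, the function u = ℓ₁'/ℓ₁ satisfies
ℓ₃u² + ℓ₃'u + c₁₆c₂₄ℓ₃²a₃² = 0 on the open set I. -/
theorem quadratic_relation_for_u
    (I : Set ℝ) (hI : IsOpen I)
    (a₁ a₂ a₃ ℓ₁ ℓ₂ ℓ₃ : ℝ → ℝ)
    (c₁₆ c₂₄ : ℝ) (hc₁₆ : c₁₆ ≠ 0) (hc₂₄ : c₂₄ ≠ 0)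
    (hℓ₁d : ∀ t ∈ I, DifferentiableAt ℝ ℓ₁ t)
    (hℓ₂d : ∀ t ∈ I, DifferentiableAt ℝ ℓ₂ t)
    (hℓ₃d : ∀ t ∈ I, DifferentiableAt ℝ ℓ₃ t)
    (ha₃d : ∀ t ∈ I, DifferentiableAt ℝ a₃ t)
    (hℓ₁0 : ∀ t ∈ I, ℓ₁ t ≠ 0) (hℓ₂0 : ∀ t ∈ I, ℓ₂ t ≠ 0) (hℓ₃0 : ∀ t ∈ I, ℓ₃ t ≠ 0)
    (ha₃0 : ∀ t ∈ I, a₃ t ≠ 0)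
    (hℓ₁'0 : ∀ t ∈ I, deriv ℓ₁ t ≠ 0) (hℓ₂'0 : ∀ t ∈ I, deriv ℓ₂ t ≠ 0)
    (haaa : ∀ t ∈ I, a₁ t * a₂ t * a₃ t = 1)
    (hlll : ∀ t ∈ I, ℓ₁ t * ℓ₂ t * ℓ₃ t = 1)
    (h16 : ∀ t ∈ I, deriv ℓ₁ t * (a₁ t) ^ 2 = -c₁₆)
    (h24 : ∀ t ∈ I, deriv ℓ₂ t * (a₂ t) ^ 2 = -c₂₄) :
    ∀ t ∈ I,
      ℓ₃ t * (deriv ℓ₁ t / ℓ₁ t) ^ 2 + deriv ℓ₃ t * (deriv ℓ₁ t / ℓ₁ t)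
        + c₁₆ * c₂₄ * (ℓ₃ t) ^ 2 * (a₃ t) ^ 2 = 0 := by
  intro t ht
  have h3 := h16 t ht
  have h4 := h24 t ht
  have h5 := haaa t ht
  have h2 := hlll t ht
  have hL1 := hℓ₁0 t ht
  have hL2 := hℓ₂0 t ht
  have hL3 := hℓ₃0 t ht
  -- derivative of product is zero
  have heq : (fun s => ℓ₁ s * ℓ₂ s * ℓ₃ s) =ᶠ[nhds t] fun _ => (1:ℝ) :=
    Filter.eventually_of_mem (hI.mem_nhds ht) hlll
  have hd0 : deriv (fun s => ℓ₁ s * ℓ₂ s * ℓ₃ s) t = 0 := by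
    rw [heq.deriv_eq]; simp
  have hdm : deriv (fun s => ℓ₁ s * ℓ₂ s * ℓ₃ s) t
      = (deriv ℓ₁ t * ℓ₂ t + ℓ₁ t * deriv ℓ₂ t) * ℓ₃ t
        + (ℓ₁ t * ℓ₂ t) * deriv ℓ₃ t := by
    rw [deriv_fun_mul ((hℓ₁d t ht).fun_mul (hℓ₂d t ht)) (hℓ₃d t ht),
      deriv_fun_mul (hℓ₁d t ht) (hℓ₂d t ht)]
  have E1 : (deriv ℓ₁ t * ℓ₂ t + ℓ₁ t * deriv ℓ₂ t) * ℓ₃ t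
      + (ℓ₁ t * ℓ₂ t) * deriv ℓ₃ t = 0 := by rw [← hdm]; exact hd0
  have key : deriv ℓ₁ t * deriv ℓ₂ t = c₁₆ * c₂₄ * (a₃ t) ^ 2 := by
    have e : deriv ℓ₁ t * deriv ℓ₂ t * (a₁ t * a₂ t * a₃ t) ^ 2
        = c₁₆ * c₂₄ * (a₃ t) ^ 2 := by
      linear_combination (deriv ℓ₂ t * (a₂ t) ^ 2 * (a₃ t) ^ 2) * h3
        + (-c₁₆ * (a₃ t) ^ 2) * h4
    rw [h5] at e; simpa using e
  have mainL2 : (ℓ₃ t * deriv ℓ₁ t ^ 2 + deriv ℓ₃ t * deriv ℓ₁ t * ℓ₁ t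
      + c₁₆ * c₂₄ * ℓ₃ t ^ 2 * a₃ t ^ 2 * ℓ₁ t ^ 2) * ℓ₂ t = 0 := by
    linear_combination (deriv ℓ₁ t) * E1 - (ℓ₁ t * ℓ₃ t) * key
      + (c₁₆ * c₂₄ * a₃ t ^ 2 * ℓ₁ t * ℓ₃ t) * h2
  have main : ℓ₃ t * deriv ℓ₁ t ^ 2 + deriv ℓ₃ t * deriv ℓ₁ t * ℓ₁ t
      + c₁₆ * c₂₄ * ℓ₃ t ^ 2 * a₃ t ^ 2 * ℓ₁ t ^ 2 = 0 :=
    (mul_eq_zero.1 mainL2).resolve_right hL2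
  field_simp
  linear_combination main
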